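/- Let A = F_q[t], Γ = SL_2(A), and N a normal subgroup of Γ containing the commutator subgroup Γ'. Then Γ/N is isomorphic to A/ql(N), where ql(N) = {a ∈ A : T(a) ∈ N}. -/

import Mathlib

open Polynomial Matrix

/-- `a ↦ T(a) = [[1,a],[0,1]]` as a homomorphism from the additive group of `A`
(written multiplicatively) to `SL₂(A)`. -/
def Thom (A : Type*) [CommRing A] : Multiplicative A →* Matrix.SpecialLinearGroup (Fin 2) A :=
  MonoidHom.mk' (fun a => ⟨!![1, a.toAdd; 0, 1], by simp [Matrix.det_fin_two_of]⟩)
    (fun a b => Subtype.ext (by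
      ext i j
      fin_cases i <;> fin_cases j <;>
        first
        | (simp [Matrix.SpecialLinearGroup.coe_mul, Matrix.mul_fin_two, add_comm]; done)
        | (erw [Matrix.SpecialLinearGroup.coe_mul]; simp [Matrix.mul_fin_two, add_comm]; done)))

section Aux

variable {A : Type*} [CommRing A]

/-- lower elementary matrix -/
def Lm (a : A) : Matrix.SpecialLinearGroup (Fin 2) A :=
  ⟨!![1, 0; a, 1], by simp [Matrix.det_fin_two_of]⟩

/-- the Weyl element -/
def wm : Matrix.SpecialLinearGroup (Fin 2) A :=
  ⟨!![0, 1; -1, 0], by simp [Matrix.det_fin_two_of]⟩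

lemma wm_val : ((wm : Matrix.SpecialLinearGroup (Fin 2) A) : Matrix (Fin 2) (Fin 2) A)
    = !![0, 1; -1, 0] := rfl

lemma Thom_val (a : A) : ((Thom A (Multiplicative.ofAdd a)) : Matrix (Fin 2) (Fin 2) A)
    = !![1, a; 0, 1] := rfl

lemma w_mul_T (a : A) : wm * Thom A (Multiplicative.ofAdd (-a)) = Lm a * wm := by
  apply Subtype.ext
  simp only [Matrix.SpecialLinearGroup.coe_mul, Thom_val]
  ext i j
  fin_cases i <;> fin_cases j <;> simp [wm, Lm, Matrix.mul_fin_two]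

lemma w_eq : (wm : Matrix.SpecialLinearGroup (Fin 2) A)
    = Thom A (Multiplicative.ofAdd 1) * Lm (-1) * Thom A (Multiplicative.ofAdd 1) := by
  apply Subtype.ext
  simp only [Matrix.SpecialLinearGroup.coe_mul, Thom_val]
  ext i j
  fin_cases i <;> fin_cases j <;> simp [wm, Lm, Matrix.mul_fin_two]

/-- diagonal matrix -/
def Dm (u v : A) (huv : u * v = 1) : Matrix.SpecialLinearGroup (Fin 2) A :=
  ⟨!![u, 0; 0, v], by simp [Matrix.det_fin_two_of, huv]⟩

lemma Dm_val (u v : A) (huv : u * v = 1) :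
    ((Dm u v huv) : Matrix (Fin 2) (Fin 2) A) = !![u, 0; 0, v] := rfl

lemma diag_w (u v : A) (huv : u * v = 1) :
    Dm u v huv * wm
    = Thom A (Multiplicative.ofAdd u) * Lm (-v) * Thom A (Multiplicative.ofAdd u) := by
  apply Subtype.ext
  simp only [Matrix.SpecialLinearGroup.coe_mul, Thom_val, Dm_val]
  ext i j
  fin_cases i <;> fin_cases j <;>
    simp [wm, Lm, Matrix.mul_fin_two] <;>
    first
      | linear_combination huv
      | linear_combination (-u) * huv
      | linear_combination (-v) * huv

end Aux

theorem quotient_iso_A_mod_quasiLevel (F : Type*) [Field F] [Fintype F]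
    (hq : Fintype.card F ≤ 3)
    (N : Subgroup (Matrix.SpecialLinearGroup (Fin 2) F[X])) [N.Normal]
    (hN : commutator (Matrix.SpecialLinearGroup (Fin 2) F[X]) ≤ N) :
    (∀ a : F[X],
        Multiplicative.ofAdd a ∈
            MonoidHom.ker ((QuotientGroup.mk' N).comp (Thom F[X])) ↔
          Thom F[X] (Multiplicative.ofAdd a) ∈ N) ∧
      Nonempty
        ((Matrix.SpecialLinearGroup (Fin 2) F[X] ⧸ N) ≃*
          (Multiplicative F[X] ⧸ MonoidHom.ker ((QuotientGroup.mk' N).comp (Thom F[X])))) := by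
  set Γ := Matrix.SpecialLinearGroup (Fin 2) F[X]
  set π := QuotientGroup.mk' N with hπ
  set φ := π.comp (Thom F[X]) with hφ
  have hcomm : ∀ x y : Γ, π x * π y = π y * π x := by
    intro x y
    have h1 : (x * y)⁻¹ * (y * x) ∈ N := by
      apply hN
      rw [commutator_def]
      open scoped commutatorElement in have h2 : (x * y)⁻¹ * (y * x) = ⁅y⁻¹, x⁻¹⁆ := by simp only [commutatorElement_def, _root_.inv_inv, _root_.mul_inv_rev, _root_.mul_assoc]; exact (congrArg (fun z => y⁻¹ * (x⁻¹ * z)) (congrArg₂ (· * ·) (inv_inv y) (inv_inv x))).symm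
      rw [h2]
      exact Subgroup.commutator_mem_commutator (Subgroup.mem_top _) (Subgroup.mem_top _)
    have h3 := (QuotientGroup.eq (s := N)).mpr h1
    simpa [_root_.map_mul, hπ] using h3
  set S := φ.range with hS
  have hT : ∀ a : F[X], π (Thom F[X] (Multiplicative.ofAdd a)) ∈ S :=
    fun a => ⟨Multiplicative.ofAdd a, rfl⟩
  have hL : ∀ a : F[X], π (Lm a) ∈ S := by
    intro a
    have h : π (Lm a) = π (Thom F[X] (Multiplicative.ofAdd (-a))) := by
      have h := congrArg π (w_mul_T a)
      rw [_root_.map_mul, _root_.map_mul, hcomm wm (Thom F[X] (Multiplicative.ofAdd (-a)))] at h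
      exact (mul_right_cancel h).symm
    rw [h]; exact hT _
  have hw : π (wm : Γ) ∈ S := by
    rw [w_eq, _root_.map_mul, _root_.map_mul]
    exact S.mul_mem (S.mul_mem (hT _) (hL _)) (hT _)
  have hdiag : ∀ (u v : F[X]) (huv : u * v = 1),
      π (Dm u v huv : Γ) ∈ S := by
    intro u v huv
    have h := congrArg π (diag_w u v huv)
    rw [_root_.map_mul] at h
    have h2 : π (Dm u v huv : Γ)
        = (π (Thom F[X] (Multiplicative.ofAdd u) * Lm (-v) * Thom F[X] (Multiplicative.ofAdd u)))
            * (π (wm : Γ))⁻¹ := by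
      rw [← h]; group
    rw [h2, _root_.map_mul, _root_.map_mul]
    exact S.mul_mem (S.mul_mem (S.mul_mem (hT _) (hL _)) (hT _)) (S.inv_mem hw)
  -- case of lower-left entry zero
  have hc0 : ∀ g : Γ, (g : Matrix (Fin 2) (Fin 2) F[X]) 1 0 = 0 → π g ∈ S := by
    intro g hc
    set a := (g : Matrix (Fin 2) (Fin 2) F[X]) 0 0 with ha
    set b := (g : Matrix (Fin 2) (Fin 2) F[X]) 0 1 with hb
    set d := (g : Matrix (Fin 2) (Fin 2) F[X]) 1 1 with hd
    have hdet : a * d = 1 := by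
      have h := g.2
      rw [Matrix.det_fin_two] at h
      rw [hc] at h
      linear_combination h
    have hgeq : g = (Dm a d hdet : Γ)
        * Thom F[X] (Multiplicative.ofAdd (d * b)) := by
      apply Subtype.ext
      simp only [Matrix.SpecialLinearGroup.coe_mul, Thom_val, Dm_val]
      refine Matrix.ext fun i j => ?_
      fin_cases i <;> fin_cases j <;>
        simp [Matrix.mul_fin_two, ← ha, ← hb, ← hd, hc] <;>
        linear_combination (-b) * hdet
    rw [hgeq, _root_.map_mul]
    exact S.mul_mem (hdiag a d hdet) (hT _)
  -- main induction on the degree of the lower-left entry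
  have main : ∀ n : ℕ, ∀ g : Γ, ((g : Matrix (Fin 2) (Fin 2) F[X]) 1 0).natDegree ≤ n →
      π g ∈ S := by
    intro n
    induction n using Nat.strong_induction_on with
    | _ n IH =>
      intro g hg
      by_cases hc : (g : Matrix (Fin 2) (Fin 2) F[X]) 1 0 = 0
      · exact hc0 g hc
      · set a := (g : Matrix (Fin 2) (Fin 2) F[X]) 0 0 with ha
        set c := (g : Matrix (Fin 2) (Fin 2) F[X]) 1 0 with hcc
        set q := a / c with hqdef
        set r := a % c with hrdef
        have hdiv : c * q + r = a := EuclideanDomain.div_add_mod a c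
        set g' := wm * (Thom F[X] (Multiplicative.ofAdd (-q)) * g) with hg'def
        have hg'10 : (g' : Matrix (Fin 2) (Fin 2) F[X]) 1 0 = -r := by
          have e1 : (g' : Matrix (Fin 2) (Fin 2) F[X])
              = !![(0 : F[X]), 1; -1, 0] * (!![1, -q; 0, 1] * (g : Matrix (Fin 2) (Fin 2) F[X])) := by
            rw [hg'def, Matrix.SpecialLinearGroup.coe_mul, Matrix.SpecialLinearGroup.coe_mul,
              Thom_val, wm_val]
          rw [e1]
          simp only [Matrix.mul_apply, Fin.sum_univ_two]
          simp [← ha, ← hcc]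
          linear_combination hdiv
        have hπg' : π g' ∈ S := by
          by_cases hr : r = 0
          · exact hc0 g' (by rw [hg'10, hr, neg_zero])
          · have hlt : r.natDegree < c.natDegree := by
              refine Polynomial.natDegree_lt_natDegree hr ?_
              exact EuclideanDomain.mod_lt a hc
            exact IH r.natDegree (lt_of_lt_of_le hlt hg) g'
              (by rw [hg'10, Polynomial.natDegree_neg])
        have hgg : π g = (π (Thom F[X] (Multiplicative.ofAdd (-q))))⁻¹ * ((π (wm : Γ))⁻¹ * π g') := by
          rw [hg'def, _root_.map_mul, _root_.map_mul]; group
        rw [hgg]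
        exact S.mul_mem (S.inv_mem (hT _)) (S.mul_mem (S.inv_mem hw) hπg')
  have hsurj : Function.Surjective φ := by
    intro x
    obtain ⟨g, rfl⟩ := QuotientGroup.mk'_surjective N x
    exact main _ g le_rfl
  constructor
  · intro a
    simp [MonoidHom.mem_ker, QuotientGroup.eq_one_iff, hφ, hπ]
  · exact ⟨(QuotientGroup.quotientKerEquivOfSurjective φ hsurj).symm⟩
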